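/- (Proposition 1) In the abstract two-stage dispatch setting, assume: (i) X w ⊆ Xfull for every w ∈ 𝒲; (ii) the mean-forecast bid satisfies w̄ ∈ 𝒲, φ̄ ∈ X w̄, and φ̄ minimizes f over X w̄; and (iii) the value set {f φ + R φ | φ ∈ Xfull} is bounded below. Then the expected system costs of the three dispatch frameworks satisfy S^StD ≤ S^BiD ≤ S^MyD. -/
import Mathlib

/-- Proposition 1: the expected system costs of the three dispatch frameworks
satisfy `S^StD ≤ S^BiD ≤ S^MyD`. -/
theorem system_cost_comparison
    {Φ W : Type*} (𝒲 : Set W) (X : W → Set Φ) (Xfull : Set Φ)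
    (f R : Φ → ℝ)
    (hsub : ∀ w ∈ 𝒲, X w ⊆ Xfull)
    (wbar : W) (φbar : Φ)
    (hwbar : wbar ∈ 𝒲) (hφbar : φbar ∈ X wbar)
    (hmin : ∀ φ ∈ X wbar, f φbar ≤ f φ)
    (hbdd : BddBelow {r | ∃ φ ∈ Xfull, r = f φ + R φ}) :
    sInf {r | ∃ φ ∈ Xfull, r = f φ + R φ} ≤
      sInf {r | ∃ φ, (∃ w ∈ 𝒲, φ ∈ X w ∧ ∀ ψ ∈ X w, f φ ≤ f ψ) ∧ r = f φ + R φ} ∧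
    sInf {r | ∃ φ, (∃ w ∈ 𝒲, φ ∈ X w ∧ ∀ ψ ∈ X w, f φ ≤ f ψ) ∧ r = f φ + R φ} ≤
      f φbar + R φbar := by
  have hsubset : {r | ∃ φ, (∃ w ∈ 𝒲, φ ∈ X w ∧ ∀ ψ ∈ X w, f φ ≤ f ψ) ∧ r = f φ + R φ} ⊆
      {r | ∃ φ ∈ Xfull, r = f φ + R φ} := by
    rintro r ⟨φ, ⟨w, hw, hφ, -⟩, rfl⟩
    exact ⟨φ, hsub w hw hφ, rfl⟩
  have hmem : f φbar + R φbar ∈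
      {r | ∃ φ, (∃ w ∈ 𝒲, φ ∈ X w ∧ ∀ ψ ∈ X w, f φ ≤ f ψ) ∧ r = f φ + R φ} :=
    ⟨φbar, ⟨wbar, hwbar, hφbar, hmin⟩, rfl⟩
  exact ⟨csInf_le_csInf hbdd ⟨_, hmem⟩ hsubset,
    csInf_le (hbdd.mono hsubset) hmem⟩
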